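/- Let κ be a cardinal and {𝒜ᵢ : i ∈ I} ⊆ 𝒫(𝒫(κ)) be ∩-closed families with κ+1 ⊆ 𝒜ᵢ for each i (ordinals identified with sets of predecessors), such that Δ(𝒜ᵢ,𝒜ⱼ) is a successor ordinal for all i ≠ j. Then the system of amalgamated families {𝒜ᵢ^am : i ∈ I} is coherent, where 𝒜ᵢ^am = { {U_{𝒜ᵢ}(η+1) : η ∈ A} : A ∈ 𝒜ᵢ }. -/

import Mathlib

open Set Topology

/-- `famU 𝒜 A` = members of `𝒜` included in `A`. -/
def famU {X : Type*} (𝒜 : Set (Set X)) (A : Set X) : Set (Set X) := {B ∈ 𝒜 | B ⊆ A}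

/-- The coarsest topology on `𝒜` making each `U(A)`, `A ∈ 𝒜`, clopen. -/
def famTop {X : Type*} (𝒜 : Set (Set X)) : TopologicalSpace 𝒜 :=
  TopologicalSpace.generateFrom
    {s | ∃ A ∈ 𝒜, s = (Subtype.val ⁻¹' famU 𝒜 A : Set 𝒜) ∨
      s = ((Subtype.val ⁻¹' famU 𝒜 A)ᶜ : Set 𝒜)}

/-- `A ∩ B ∈ 𝒜 ∪ {∅}` for all `A, B ∈ 𝒜`. -/
def InterClosed {X : Type*} (𝒜 : Set (Set X)) : Prop :=
  ∀ A ∈ 𝒜, ∀ B ∈ 𝒜, A ∩ B ∈ 𝒜 ∪ {(∅ : Set X)}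

/-- Any two members meeting each other are comparable. -/
def TreeLike {X : Type*} (𝒜 : Set (Set X)) : Prop :=
  ∀ A ∈ 𝒜, ∀ B ∈ 𝒜, (A ∩ B).Nonempty → A ⊆ B ∨ B ⊆ A

/-- The union of any nonempty `⊆`-chain in `𝒜` belongs to `𝒜`. -/
def ChainClosed {X : Type*} (𝒜 : Set (Set X)) : Prop :=
  ∀ ℬ ⊆ 𝒜, ℬ.Nonempty → IsChain (· ⊆ ·) ℬ → ⋃₀ ℬ ∈ 𝒜

/-- A space is scattered iff every nonempty subset has a point isolated in it. -/
def IsScatteredSpace (Y : Type*) [TopologicalSpace Y] : Prop :=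
  ∀ S : Set Y, S.Nonempty → ∃ x ∈ S, ∃ t : Set Y, IsOpen t ∧ t ∩ S = {x}

/-- The `o`-th Cantor–Bendixson level: isolated points of the complement of earlier levels. -/
noncomputable def cbLevel (Y : Type*) [TopologicalSpace Y] (o : Ordinal.{u}) : Set Y :=
  {x | (∀ p, (h : p < o) → x ∉ cbLevel Y p) ∧
    ∃ t : Set Y, IsOpen t ∧ t ∩ {y | ∀ p, (h : p < o) → y ∉ cbLevel Y p} = {x}}
termination_by o

/-- The Cantor–Bendixson height: least level that is empty. -/
noncomputable def cbHeight (Y : Type*) [TopologicalSpace Y] : Ordinal.{u} :=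
  sInf {o | cbLevel Y o = ∅}

/-- Amalgamation: if the `𝒜ᵢ ⊆ 𝒫(κ)` are `∩`-closed families containing all ordinals `≤ κ`
and `Δ(𝒜ᵢ, 𝒜ⱼ)` is a successor for `i ≠ j`, then the amalgamated system
`𝒜ᵢᵃᵐ = {k_{𝒜ᵢ}''A : A ∈ 𝒜ᵢ}`, `k_{𝒜ᵢ}(η) = U_{𝒜ᵢ}(η+1)`, is coherent. -/
lemma rest_eq_famU {κ : Cardinal.{0}} {𝒜 : Set (Set Ordinal.{0})}
    (hic : InterClosed 𝒜) (hini : ∀ η ≤ κ.ord, Set.Iio η ∈ 𝒜)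
    {δ : Ordinal} (hδ : δ ≤ κ.ord) :
    (fun A => A ∩ Set.Iio δ) '' 𝒜 = famU 𝒜 (Set.Iio δ) := by
  have h0 : (∅ : Set Ordinal) ∈ 𝒜 := by
    have := hini 0 zero_le
    rwa [show Set.Iio (0 : Ordinal) = ∅ from
      Set.eq_empty_iff_forall_notMem.mpr fun x hx => (not_lt_of_ge (zero_le (a := x))) hx] at this
  ext C
  constructor
  · rintro ⟨A, hA, rfl⟩
    refine ⟨?_, Set.inter_subset_right⟩
    show A ∩ Set.Iio δ ∈ 𝒜
    rcases hic A hA _ (hini δ hδ) with h | h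
    · exact h
    · simp only [Set.mem_singleton_iff] at h
      rw [h]; exact h0
  · rintro ⟨hC, hCs⟩
    exact ⟨C, hC, by simp [Set.inter_eq_left.mpr hCs]⟩

theorem stmt9 {I : Type*} (κ : Cardinal.{0}) (𝒜 : I → Set (Set Ordinal.{0}))
    (hsub : ∀ i, ∀ A ∈ 𝒜 i, A ⊆ Set.Iio κ.ord)
    (hic : ∀ i, InterClosed (𝒜 i))
    (hini : ∀ i, ∀ η ≤ κ.ord, Set.Iio η ∈ 𝒜 i)
    (hΔ : ∀ i j, i ≠ j →
      ∃ β : Ordinal,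
        sInf {δ : Ordinal |
            (fun A => A ∩ Set.Iio δ) '' 𝒜 i ≠ (fun A => A ∩ Set.Iio δ) '' 𝒜 j} = β + 1) :
    ∀ i j, i ≠ j →
      ∀ S ∈ (fun A => (fun η => famU (𝒜 i) (Set.Iio (η + 1))) '' A) '' 𝒜 i,
      ∀ T ∈ (fun A => (fun η => famU (𝒜 j) (Set.Iio (η + 1))) '' A) '' 𝒜 j,
        S ∩ T ∈ ((fun A => (fun η => famU (𝒜 i) (Set.Iio (η + 1))) '' A) '' 𝒜 i)
          ∪ {(∅ : Set (Set (Set Ordinal.{0})))} := by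
  intro i j hij S hS T hT
  obtain ⟨A, hA, rfl⟩ := hS
  obtain ⟨B, hB, rfl⟩ := hT
  obtain ⟨β, hβ⟩ := hΔ i j hij
  set D : Set Ordinal :=
    {δ : Ordinal | (fun A => A ∩ Set.Iio δ) '' 𝒜 i ≠ (fun A => A ∩ Set.Iio δ) '' 𝒜 j} with hD
  -- monotonicity: agreement at δ' implies agreement at δ ≤ δ'
  have mono : ∀ δ δ' : Ordinal, δ ≤ δ' →
      (fun A => A ∩ Set.Iio δ') '' 𝒜 i = (fun A => A ∩ Set.Iio δ') '' 𝒜 j →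
      (fun A => A ∩ Set.Iio δ) '' 𝒜 i = (fun A => A ∩ Set.Iio δ) '' 𝒜 j := by
    intro δ δ' hle h
    have key : ∀ 𝒞 : Set (Set Ordinal), (fun A => A ∩ Set.Iio δ) '' 𝒞 =
        (fun A => A ∩ Set.Iio δ) '' ((fun A => A ∩ Set.Iio δ') '' 𝒞) := by
      intro 𝒞
      rw [← Set.image_comp]
      apply Set.image_congr
      intro a _
      simp only [Function.comp_apply, Set.inter_assoc]
      congr 1
      rw [Set.Iio_inter_Iio, min_eq_right hle]
    rw [key (𝒜 i), key (𝒜 j), h]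
  have hDne : D.Nonempty := by
    by_contra h
    rw [Set.not_nonempty_iff_eq_empty] at h
    have h0 : (0 : Ordinal) = β + 1 := by rw [← hβ, h, Ordinal.sInf_empty]
    exact (Ordinal.succ_ne_zero β) (by rw [← Ordinal.add_one_eq_succ]; exact h0.symm)
  have hmem : β + 1 ∈ D := hβ ▸ csInf_mem hDne
  have hnotmem : ∀ δ < β + 1, δ ∉ D := fun δ hδ hin =>
    absurd (csInf_le (OrderBot.bddBelow D) hin) (by rw [hβ]; exact not_le.mpr hδ)
  -- β + 1 ≤ κ.ord
  have hfix : ∀ k, (fun A => A ∩ Set.Iio κ.ord) '' 𝒜 k = 𝒜 k := by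
    intro k
    ext C
    constructor
    · rintro ⟨A₀, hA₀, rfl⟩
      simpa [Set.inter_eq_left.mpr (hsub k A₀ hA₀)] using hA₀
    · intro hC
      exact ⟨C, hC, by simp [Set.inter_eq_left.mpr (hsub k C hC)]⟩
  have hne : 𝒜 i ≠ 𝒜 j := by
    intro h
    obtain ⟨δ, hδ⟩ := hDne
    exact hδ (by rw [h])
  have hβκ : β + 1 ≤ κ.ord := by
    rw [← hβ]
    apply csInf_le (OrderBot.bddBelow D)
    simp only [hD, Set.mem_setOf_eq, hfix i, hfix j]
    exact hne
  -- famU's agree at δ ≤ β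
  have hagree : ∀ δ ≤ β, famU (𝒜 i) (Set.Iio δ) = famU (𝒜 j) (Set.Iio δ) := by
    intro δ hδ
    have hδκ : δ ≤ κ.ord := le_trans (le_trans hδ (le_of_lt (lt_add_one β))) hβκ
    have hnd : δ ∉ D := hnotmem δ (lt_of_le_of_lt hδ (lt_add_one β))
    rw [hD, Set.mem_setOf_eq, not_not] at hnd
    rw [← rest_eq_famU (hic i) (hini i) hδκ, ← rest_eq_famU (hic j) (hini j) hδκ, hnd]
  -- famU equality at η+1 forces η < β
  have hforce : ∀ η : Ordinal, η < κ.ord →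
      famU (𝒜 i) (Set.Iio (η + 1)) = famU (𝒜 j) (Set.Iio (η + 1)) → η < β := by
    intro η hηκ heq
    have hηκ' : η + 1 ≤ κ.ord := Order.add_one_le_of_lt hηκ
    have heq' : (fun A => A ∩ Set.Iio (η + 1)) '' 𝒜 i
        = (fun A => A ∩ Set.Iio (η + 1)) '' 𝒜 j := by
      rw [rest_eq_famU (hic i) (hini i) hηκ', rest_eq_famU (hic j) (hini j) hηκ']
      exact heq
    by_contra hcon
    push_neg at hcon
    exact absurd (mono (β + 1) (η + 1) (add_le_add_left hcon 1) heq') hmem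
  -- B ∩ Iio β ∈ 𝒜 i
  have hβκ' : β ≤ κ.ord := le_trans (le_of_lt (lt_add_one β)) hβκ
  have hBβ : B ∩ Set.Iio β ∈ 𝒜 i := by
    have hβD : β ∉ D := hnotmem β (lt_add_one β)
    rw [hD, Set.mem_setOf_eq, not_not] at hβD
    have : B ∩ Set.Iio β ∈ (fun A => A ∩ Set.Iio β) '' 𝒜 j := ⟨B, hB, rfl⟩
    rw [← hβD, rest_eq_famU (hic i) (hini i) hβκ'] at this
    exact this.1
  -- the image description of the intersection
  have himg : (fun η => famU (𝒜 i) (Set.Iio (η + 1))) '' A ∩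
      (fun η => famU (𝒜 j) (Set.Iio (η + 1))) '' B =
      (fun η => famU (𝒜 i) (Set.Iio (η + 1))) '' (A ∩ (B ∩ Set.Iio β)) := by
    ext x
    constructor
    · rintro ⟨⟨η, hηA, rfl⟩, ⟨ξ, hξB, hξ⟩⟩
      have hηκ : η < κ.ord := hsub i A hA hηA
      have hξκ : ξ < κ.ord := hsub j B hB hξB
      -- max elements
      have hmaxi : Set.Iio (η + 1) ∈ famU (𝒜 i) (Set.Iio (η + 1)) :=
        ⟨hini i (η + 1) (Order.add_one_le_of_lt hηκ), le_refl _⟩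
      have hmaxj : Set.Iio (ξ + 1) ∈ famU (𝒜 j) (Set.Iio (ξ + 1)) :=
        ⟨hini j (ξ + 1) (Order.add_one_le_of_lt hξκ), le_refl _⟩
      have hξ' : famU (𝒜 j) (Set.Iio (ξ + 1)) = famU (𝒜 i) (Set.Iio (η + 1)) := hξ
      have h1 : Set.Iio (η + 1) ⊆ Set.Iio (ξ + 1) := (hξ'.symm ▸ hmaxi : _ ∈ famU (𝒜 j) _).2
      have h2 : Set.Iio (ξ + 1) ⊆ Set.Iio (η + 1) := (hξ' ▸ hmaxj : _ ∈ famU (𝒜 i) _).2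
      have hηξ : η = ξ := by
        have e1 : η ≤ ξ := Order.lt_add_one_iff.mp
          (lt_of_lt_of_le (lt_add_one η) (Set.Iio_subset_Iio_iff.mp h1))
        have e2 : ξ ≤ η := Order.lt_add_one_iff.mp
          (lt_of_lt_of_le (lt_add_one ξ) (Set.Iio_subset_Iio_iff.mp h2))
        exact le_antisymm e1 e2
      subst hηξ
      have hηβ : η < β := hforce η hηκ hξ.symm
      exact ⟨η, ⟨hηA, hξB, hηβ⟩, rfl⟩
    · rintro ⟨η, ⟨hηA, hηB, hηβ⟩, rfl⟩
      refine ⟨⟨η, hηA, rfl⟩, ⟨η, hηB, ?_⟩⟩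
      exact (hagree (η + 1) (Order.add_one_le_of_lt hηβ)).symm
  rw [himg]
  rcases hic i A hA _ hBβ with h | h
  · exact Or.inl ⟨A ∩ (B ∩ Set.Iio β), h, rfl⟩
  · simp only [Set.mem_singleton_iff] at h
    rw [h]
    simp
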